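/- SWU is an upper bound on utility of all super-sequences: for any sequence t and any extension t' = t ⋄ w (w possibly empty), u(t', D) ≤ SWU(t, D), where SWU(t, D) = Σ_{S∈D, t⊑S} u(S). -/

import Mathlib

open scoped BigOperators

attribute [local instance] Classical.propDecidable

noncomputable section

abbrev Item := ℕ
abbrev QItemset := Item →₀ ℝ
abbrev QSeq := List QItemset
abbrev Pattern := List (Finset Item)
abbrev DB := Finset QSeq

/-- All item utilities of `S` are nonnegative. -/
def NonNegS (S : QSeq) : Prop := ∀ E ∈ S, ∀ i : Item, 0 ≤ E i

/-- Utility of an itemset `e` inside a q-itemset `E`. -/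
def itemsetUtil (e : Finset Item) (E : QItemset) : ℝ := ∑ i ∈ e, E i

/-- Total utility `u(S)` of a q-sequence. -/
def seqUtil (S : QSeq) : ℝ := (S.map fun E => ∑ i ∈ E.support, E i).sum

/-- `js` is the (0-based) position list of an instance of pattern `t` in `S`. -/
def IsInstance (t : Pattern) (S : QSeq) (js : List ℕ) : Prop :=
  js.length = t.length ∧ js.Pairwise (· < ·) ∧ (∀ j ∈ js, j < S.length) ∧
    ∀ p ∈ js.zip t, p.2 ⊆ (S.getD p.1 0).support

/-- Utility of the instance of `t` at positions `js` in `S`. -/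
def instUtil (t : Pattern) (S : QSeq) (js : List ℕ) : ℝ :=
  ((js.zip t).map fun p => itemsetUtil p.2 (S.getD p.1 0)).sum

/-- `t ⊑ S`. -/
def Contains (t : Pattern) (S : QSeq) : Prop := ∃ js, IsInstance t S js

/-- `u(t,S)`: maximum instance utility of `t` in `S`. -/
def patUtilS (t : Pattern) (S : QSeq) : ℝ :=
  sSup {x | ∃ js, IsInstance t S js ∧ x = instUtil t S js}

/-- `u(t,D)`. -/
def patUtilD (t : Pattern) (D : DB) : ℝ :=
  ∑ S ∈ D, if Contains t S then patUtilS t S else 0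

/-- `p` is an extension position of `t` in `S`. -/
def IsExtPos (t : Pattern) (S : QSeq) (p : ℕ) : Prop :=
  ∃ js, IsInstance t S js ∧ js.getLast? = some p

/-- `u(t,p,S)`: maximum instance utility among instances with extension position `p`. -/
def patUtilP (t : Pattern) (S : QSeq) (p : ℕ) : ℝ :=
  sSup {x | ∃ js, IsInstance t S js ∧ js.getLast? = some p ∧ x = instUtil t S js}

/-- The utilities of the items of `S`, flattened in order (items within an
itemset sorted alphabetically). -/
def flatUtils (S : QSeq) : List ℝ :=
  (S.map fun E => (E.support.sort (· ≤ ·)).map fun i => E i).flatten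

/-- `u(S/_m)`: utility of the remaining q-sequence after (1-based) flattened index `m`. -/
def remUtil (S : QSeq) (m : ℕ) : ℝ := ((flatUtils S).drop m).sum

/-- The extension item of a pattern: the last item of its last itemset. -/
def extItem (t : Pattern) : Item := WithBot.unbotD 0 (t.getLastD ∅).max

/-- 1-based flattened index of item `i` placed in itemset number `p` of `S`. -/
def flatIdx (S : QSeq) (p : ℕ) (i : Item) : ℕ :=
  ((S.take p).map fun E => E.support.card).sum +
    ((S.getD p 0).support.sort (· ≤ ·)).idxOf i + 1

/-- `I(t,p)`: flattened index of the extension item of `t` at extension position `p`. -/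
def extIdx (t : Pattern) (S : QSeq) (p : ℕ) : ℕ := flatIdx S p (extItem t)

/-- `PEU(t,p,S)`. -/
def peuP (t : Pattern) (S : QSeq) (p : ℕ) : ℝ :=
  if 0 ≤ remUtil S (extIdx t S p) then patUtilP t S p + remUtil S (extIdx t S p) else 0

/-- `PEU(t,S)`; by convention `PEU(⟨⟩,S) = u(S)`. -/
def peu (t : Pattern) (S : QSeq) : ℝ :=
  if t = [] then seqUtil S
  else sSup {x | ∃ p, IsExtPos t S p ∧ x = peuP t S p}

/-- `PEU(t,D)`. -/
def peuD (t : Pattern) (D : DB) : ℝ :=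
  ∑ S ∈ D, if Contains t S then peu t S else 0

/-- S-Extension: `t ⋄ₛ w`. -/
def sExt (t w : Pattern) : Pattern := t ++ w

/-- I-Extension: `t ⋄ᵢ w`. -/
def iExt (t w : Pattern) : Pattern :=
  t.dropLast ++ [t.getLastD ∅ ∪ w.headD ∅] ++ w.tail

/-- Precondition for I-Extension: every item of the last itemset of `t`
precedes every item of the first itemset of `w`. -/
def IExtOK (t w : Pattern) : Prop :=
  t ≠ [] ∧ w ≠ [] ∧ ∀ i ∈ t.getLastD ∅, ∀ i' ∈ w.headD ∅, i < i'

/-- `t'` is an extension of `t` by a nonempty sequence `w` (I- or S-Extension). -/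
def IsExt (t t' : Pattern) : Prop :=
  ∃ w, w ≠ [] ∧ (t' = sExt t w ∨ (IExtOK t w ∧ t' = iExt t w))

/-- `t' = t ⋄ w` with `w` possibly empty. -/
def IsExtOrEq (t t' : Pattern) : Prop := t' = t ∨ IsExt t t'

/-- `t = tp ⋄ i`, a one-item extension. -/
def IsOneItemExt (tp t : Pattern) (i : Item) : Prop :=
  t = sExt tp [{i}] ∨ (IExtOK tp [{i}] ∧ t = iExt tp [{i}])

/-- `RSU(t,S)` where `tp` is the one-item-shorter prefix of `t`. -/
def rsuS (tp t : Pattern) (S : QSeq) : ℝ :=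
  if Contains t S then peu tp S else 0

/-- `RSU(t,D)`. -/
def rsuD (tp t : Pattern) (D : DB) : ℝ := ∑ S ∈ D, rsuS tp t S

/-- First (smallest) extension position of `t` in `S`. -/
def firstExtPos (t : Pattern) (S : QSeq) : ℕ := sInf {p | IsExtPos t S p}

/-- `TRSU(t,S)` where `tp` is the one-item-shorter prefix of `t`. -/
def trsuS (tp t : Pattern) (S : QSeq) : ℝ :=
  if Contains t S then
    if peu tp S = patUtilP tp S (firstExtPos tp S)
        + remUtil S (extIdx tp S (firstExtPos tp S)) then
      peu tp S -
        (remUtil S (extIdx tp S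
            (sSup {p | IsExtPos tp S p ∧ p ≤ firstExtPos t S})) -
         remUtil S (extIdx t S (firstExtPos t S) - 1))
    else rsuS tp t S
  else 0

/-- `TRSU(t,D)`. -/
def trsuD (tp t : Pattern) (D : DB) : ℝ := ∑ S ∈ D, trsuS tp t S

/-- `SWU(t,D)`. -/
def swu (t : Pattern) (D : DB) : ℝ :=
  ∑ S ∈ D, if Contains t S then seqUtil S else 0

/-- Pattern-level containment `t ⊑ t'`. -/
def PatSub (t t' : Pattern) : Prop :=
  ∃ js : List ℕ, js.length = t.length ∧ js.Pairwise (· < ·) ∧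
    (∀ j ∈ js, j < t'.length) ∧ ∀ p ∈ js.zip t, p.2 ⊆ t'.getD p.1 ∅

lemma sum_map_range (S : QSeq) (h : QItemset → ℝ) :
    (S.map h).sum = ∑ j ∈ Finset.range S.length, h (S.getD j 0) := by
  induction S with
  | nil => simp
  | cons a l ih => simp [Finset.sum_range_succ', ih, add_comm]

lemma seqUtil_nonneg (S : QSeq) (h : NonNegS S) : 0 ≤ seqUtil S := by
  apply List.sum_nonneg
  intro x hx
  simp only [List.mem_map] at hx
  obtain ⟨E, hE, rfl⟩ := hx
  exact Finset.sum_nonneg fun i _ => h E hE i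

lemma getD_nonneg (S : QSeq) (h : NonNegS S) (j : ℕ) (i : Item) :
    0 ≤ (S.getD j 0) i := by
  by_cases hj : j < S.length
  · rw [List.getD_eq_getElem _ _ hj]; exact h _ (List.getElem_mem hj) i
  · rw [List.getD_eq_default _ _ (le_of_not_gt hj)]; simp

lemma F_nonneg (S : QSeq) (h : NonNegS S) (j : ℕ) :
    0 ≤ ∑ i ∈ (S.getD j 0).support, (S.getD j 0) i :=
  Finset.sum_nonneg fun i _ => getD_nonneg S h j i

lemma instUtil_le_seqUtil (t : Pattern) (S : QSeq) (js : List ℕ) (h : NonNegS S)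
    (hinst : IsInstance t S js) : instUtil t S js ≤ seqUtil S := by
  obtain ⟨hlen, hsort, hbd, hzip⟩ := hinst
  set F : ℕ → ℝ := fun j => ∑ i ∈ (S.getD j 0).support, (S.getD j 0) i with hF
  have step1 : instUtil t S js ≤ ((js.zip t).map fun p => F p.1).sum := by
    apply List.sum_le_sum
    intro p hp
    exact Finset.sum_le_sum_of_subset_of_nonneg (hzip p hp)
      fun i _ _ => getD_nonneg S h p.1 i
  have step2 : ((js.zip t).map fun p => F p.1).sum = (js.map F).sum := by
    have : (js.zip t).map (fun p => F p.1) = ((js.zip t).map Prod.fst).map F := by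
      simp [List.map_map, Function.comp]
    rw [this, List.map_fst_zip (le_of_eq hlen)]
  have hnd : js.Nodup := hsort.nodup
  have step3 : (js.map F).sum = ∑ j ∈ js.toFinset, F j := (List.sum_toFinset F hnd).symm
  have step4 : ∑ j ∈ js.toFinset, F j ≤ ∑ j ∈ Finset.range S.length, F j := by
    apply Finset.sum_le_sum_of_subset_of_nonneg
    · intro j hj
      simp only [List.mem_toFinset] at hj
      exact Finset.mem_range.mpr (hbd j hj)
    · intro j _ _; exact F_nonneg S h j
  calc instUtil t S js ≤ _ := step1
    _ = _ := step2
    _ = _ := step3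
    _ ≤ _ := step4
    _ = seqUtil S := by rw [seqUtil, sum_map_range]

lemma contains_mono (t t' : Pattern) (hlen : t.length ≤ t'.length)
    (hsub : ∀ k, k < t.length → t.getD k ∅ ⊆ t'.getD k ∅) (S : QSeq) :
    Contains t' S → Contains t S := by
  rintro ⟨js, hl, hs, hb, hz⟩
  refine ⟨js.take t.length, ?_, ?_, ?_, ?_⟩
  · simp [hl, hlen]
  · exact hs.sublist (List.take_sublist _ _)
  · intro j hj; exact hb j (List.mem_of_mem_take hj)
  · intro p hp
    rw [List.mem_iff_getElem] at hp
    obtain ⟨k, hk, rfl⟩ := hp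
    rw [List.getElem_zip]
    have hkt : k < t.length := by
      simp only [List.length_zip, List.length_take, hl] at hk
      omega
    have hkt' : k < t'.length := lt_of_lt_of_le hkt hlen
    have hkj : k < js.length := hl ▸ hkt'
    have hktake : k < (js.take t.length).length := by simp [hl]; omega
    have e1 : (js.take t.length)[k]'hktake = js[k] := List.getElem_take ..
    have h2 : (js[k], t'[k]) ∈ js.zip t' := by
      rw [List.mem_iff_getElem]
      exact ⟨k, by simp [List.length_zip, hl, hkt'], List.getElem_zip ..⟩
    have h3 := hz _ h2
    simp only at h3 ⊢
    rw [show (js.take t.length)[k] = js[k] from e1]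
    refine subset_trans ?_ h3
    have := hsub k hkt
    rwa [List.getD_eq_getElem _ _ hkt, List.getD_eq_getElem _ _ hkt'] at this

lemma contains_of_ext (t t' : Pattern) (hext : IsExtOrEq t t') (S : QSeq) :
    Contains t' S → Contains t S := by
  rcases hext with rfl | ⟨w, hw, hcase | ⟨hok, heq⟩⟩
  · exact id
  · subst hcase
    refine contains_mono t (sExt t w) (by simp [sExt]) ?_ S
    intro k hk
    rw [sExt, List.getD_append _ _ _ _ hk]
  · subst heq
    have ht : t ≠ [] := hok.1
    have htl : 0 < t.length := List.length_pos_iff.mpr ht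
    refine contains_mono t (iExt t w) ?_ ?_ S
    · simp [iExt]; omega
    · intro k hk
      by_cases hk1 : k < t.length - 1
      · have hd : k < (t.dropLast).length := by simp; omega
        have : (iExt t w).getD k ∅ = t.getD k ∅ := by
          rw [iExt, List.append_assoc, List.getD_append _ _ _ _ hd,
            List.getD_eq_getElem _ _ hd, List.getD_eq_getElem _ _ hk,
            List.getElem_dropLast]
        rw [this]
      · have hkeq : k = t.length - 1 := by omega
        subst hkeq
        have h1 : t.length - 1 < ((t.dropLast ++ [t.getLastD ∅ ∪ w.headD ∅]) : Pattern).length := by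
          simp
        have : (iExt t w).getD (t.length - 1) ∅ = t.getLastD ∅ ∪ w.headD ∅ := by
          rw [iExt, List.getD_append _ _ _ _ h1,
            List.getD_append_right _ _ _ _ (by simp)]
          simp
        rw [this]
        have h2 : t.getD (t.length - 1) ∅ = t.getLastD ∅ := by
          rw [List.getD_eq_getElem _ _ (by omega), List.getLastD_eq_getLast?,
            List.getLast?_eq_getElem?]
          simp [List.getElem?_eq_getElem (by omega : t.length - 1 < t.length)]
        rw [h2]
        exact Finset.subset_union_left

lemma patUtilS_le_seqUtil (t : Pattern) (S : QSeq) (h : NonNegS S) :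
    patUtilS t S ≤ seqUtil S := by
  apply Real.sSup_le _ (seqUtil_nonneg S h)
  rintro x ⟨js, hinst, rfl⟩
  exact instUtil_le_seqUtil t S js h hinst

/-- SWU is an upper bound on the utility of all super-sequences:
for any extension `t' = t ⋄ w` (`w` possibly empty), `u(t',D) ≤ SWU(t,D)`. -/
theorem patUtilD_le_swu (D : DB) (hnn : ∀ S ∈ D, NonNegS S)
    (t t' : Pattern) (hext : IsExtOrEq t t') :
    patUtilD t' D ≤ swu t D := by
  apply Finset.sum_le_sum
  intro S hS
  by_cases hc' : Contains t' S
  · rw [if_pos hc', if_pos (contains_of_ext t t' hext S hc')]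
    exact patUtilS_le_seqUtil t' S (hnn S hS)
  · rw [if_neg hc']
    split
    · exact seqUtil_nonneg S (hnn S hS)
    · exact le_refl 0
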